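/- Let h⁰>0 and suppose ψ₀ solves ψ₀'' = ((−1+h⁰t)²−1)ψ₀ on [0,∞) with ψ₀(0)=1, ψ₀'(0)=0, ψ₀>0, ψ₀'<0 on (0,∞), and ψ₀(t), ψ₀'(t) → 0 exponentially as t→∞ (so that (−1+h⁰t)²ψ₀(t)² → 0). Then ∫₀^∞ ψ₀(t)² (−1 + h⁰ t) dt = 0. -/

import Mathlib

open Set Filter MeasureTheory

/-- For the decaying positive solution ψ₀ of ψ'' = ((-1+h⁰t)²-1)ψ,
the integral ∫₀^∞ ψ₀²(-1+h⁰t) dt vanishes. -/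
theorem stmt_8 (h0 : ℝ) (hh0 : 0 < h0) (ψ : ℝ → ℝ)
    (hinit : ψ 0 = 1) (hinit' : deriv ψ 0 = 0)
    (hode : ∀ t ∈ Ici (0:ℝ),
      HasDerivAt (deriv ψ) (((-1 + h0 * t)^2 - 1) * ψ t) t)
    (hpos : ∀ t ∈ Ioi (0:ℝ), 0 < ψ t)
    (hdec : ∀ t ∈ Ioi (0:ℝ), deriv ψ t < 0)
    (hexp : ∃ C c : ℝ, 0 < C ∧ 0 < c ∧ ∀ t ∈ Ici (0:ℝ),
      |ψ t| ≤ C * Real.exp (-c * t) ∧ |deriv ψ t| ≤ C * Real.exp (-c * t))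
    (hlim : Tendsto (fun t => (-1 + h0 * t)^2 * (ψ t)^2) atTop (nhds 0)) :
    ∫ t in Ioi (0:ℝ), (ψ t)^2 * (-1 + h0 * t) = 0 := by
  obtain ⟨C, c, hC, hc, hbound⟩ := hexp
  set F : ℝ → ℝ := fun t => (deriv ψ t)^2/2 - (((-1 + h0*t)^2 - 1) * (ψ t)^2)/2 with hFdef
  set f' : ℝ → ℝ := fun t => (-h0) * ((ψ t)^2 * (-1 + h0*t)) with hf'def
  -- ψ is differentiable on Ioi 0
  have hψd : ∀ t ∈ Ioi (0:ℝ), HasDerivAt ψ (deriv ψ t) t := by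
    intro t ht
    exact (differentiableAt_of_deriv_ne_zero (ne_of_lt (hdec t ht))).hasDerivAt
  -- F has derivative f' on Ioi 0
  have hF' : ∀ t ∈ Ioi (0:ℝ), HasDerivAt F (f' t) t := by
    intro t ht
    have h1 := hode t (mem_Ici.mpr (le_of_lt (mem_Ioi.mp ht)))
    have h2 := hψd t ht
    have hcoef : HasDerivAt (fun s => ((-1 + h0*s)^2 - 1)) (2*(-1+h0*t)*h0) t := by
      have hlin : HasDerivAt (fun s => (-1 + h0*s)) h0 t := by
        simpa using ((hasDerivAt_id t).const_mul h0).const_add (-1)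
      simpa using (hlin.pow 2).sub_const 1
    have := ((h1.pow 2).div_const 2).sub ((hcoef.mul (h2.pow 2)).div_const 2)
    refine this.congr_deriv ?_
    simp only [hf'def, Pi.pow_apply]
    ring
  -- F is continuous within Ici 0 at 0, with F 0 = 0
  have hF0 : F 0 = 0 := by simp [hFdef, hinit', hinit]
  have hcont : ContinuousWithinAt F (Ici (0:ℝ)) 0 := by
    rw [ContinuousWithinAt, hF0]
    have hd0 : ContinuousAt (deriv ψ) 0 :=
      (hode 0 (mem_Ici.mpr le_rfl)).differentiableAt.continuousAt
    have t1 : Tendsto (fun t => (deriv ψ t)^2/2) (nhdsWithin 0 (Ici (0:ℝ))) (nhds 0) := by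
      have : ContinuousAt (fun t => (deriv ψ t)^2/2) 0 := by fun_prop
      have := this.continuousWithinAt (s := Ici (0:ℝ))
      simpa [ContinuousWithinAt, hinit'] using this
    have t2 : Tendsto (fun t => (((-1 + h0*t)^2 - 1) * (ψ t)^2)/2)
        (nhdsWithin 0 (Ici (0:ℝ))) (nhds 0) := by
      apply squeeze_zero_norm'
        (a := fun t => |((-1 + h0*t)^2 - 1)| * (C^2/2))
      · filter_upwards [self_mem_nhdsWithin] with t ht
        have hb := (hbound t ht).1
        have he : Real.exp (-c*t) ≤ 1 := by
          apply Real.exp_le_one_iff.mpr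
          have : (0:ℝ) ≤ t := ht
          nlinarith
        have hψle : |ψ t| ≤ C := le_trans hb (by nlinarith)
        have hsq : (ψ t)^2 ≤ C^2 := by
          have := abs_nonneg (ψ t)
          nlinarith [sq_abs (ψ t)]
        have hpsq : (0:ℝ) ≤ (ψ t)^2 := sq_nonneg _
        have h2 : ‖((-1 + h0*t)^2 - 1) * (ψ t)^2/2‖
            = |((-1 + h0*t)^2 - 1)| * (ψ t)^2 / 2 := by
          rw [Real.norm_eq_abs, abs_div, abs_mul, abs_of_nonneg hpsq]
          norm_num
        rw [h2]
        nlinarith [abs_nonneg ((-1 + h0*t)^2 - 1)]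
      · have : ContinuousAt (fun t => |((-1 + h0*t)^2 - 1)| * (C^2/2)) 0 := by fun_prop
        have h := this.continuousWithinAt (s := Ici (0:ℝ))
        have hv : |((-1 + h0*(0:ℝ))^2 - 1)| * (C^2/2) = 0 := by norm_num
        rw [ContinuousWithinAt, hv] at h
        exact h
    have := t1.sub t2
    simpa using this
  -- F tends to 0 at infinity
  have hFtop : Tendsto F atTop (nhds 0) := by
    have hrw : F = fun t => ((deriv ψ t)^2 - (-1 + h0*t)^2 * (ψ t)^2 + (ψ t)^2)/2 := by
      funext t; simp only [hFdef]; ring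
    have texp : Tendsto (fun t => C * Real.exp (-c*t)) atTop (nhds 0) := by
      have := Real.tendsto_exp_neg_atTop_nhds_zero.comp
        (tendsto_id.const_mul_atTop hc)
      have h2 : Tendsto (fun t => Real.exp (-(c*t))) atTop (nhds 0) := this
      simpa [neg_mul, mul_zero] using h2.const_mul C
    have tA : Tendsto (fun t => (deriv ψ t)^2) atTop (nhds 0) := by
      apply squeeze_zero_norm' (a := fun t => (C * Real.exp (-c*t))^2)
      · filter_upwards [eventually_ge_atTop (0:ℝ)] with t ht
        have hb := (hbound t ht).2
        have := abs_nonneg (deriv ψ t)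
        rw [Real.norm_eq_abs, abs_of_nonneg (sq_nonneg _)]
        nlinarith [sq_abs (deriv ψ t)]
      · simpa using texp.pow 2
    have tP : Tendsto (fun t => (ψ t)^2) atTop (nhds 0) := by
      apply squeeze_zero_norm' (a := fun t => (C * Real.exp (-c*t))^2)
      · filter_upwards [eventually_ge_atTop (0:ℝ)] with t ht
        have hb := (hbound t ht).1
        have := abs_nonneg (ψ t)
        rw [Real.norm_eq_abs, abs_of_nonneg (sq_nonneg _)]
        nlinarith [sq_abs (ψ t)]
      · simpa using texp.pow 2
    rw [hrw]
    have := ((tA.sub hlim).add tP).div_const 2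
    simpa using this
  -- integrability of f' on Ioi 0
  have hmeas : AEStronglyMeasurable f' (volume.restrict (Ioi (0:ℝ))) := by
    apply ContinuousOn.aestronglyMeasurable _ measurableSet_Ioi
    intro t ht
    have hψc : ContinuousWithinAt ψ (Ioi (0:ℝ)) t :=
      (hψd t ht).continuousAt.continuousWithinAt
    exact (continuousWithinAt_const.mul ((hψc.pow 2).mul
      (continuousWithinAt_const.add (continuousWithinAt_const.mul continuousWithinAt_id))))
  have hint : IntegrableOn f' (Ioi (0:ℝ)) := by
    have hg : IntegrableOn (fun t => (h0*C^2*(1+h0/c)) * Real.exp (-c*t)) (Ioi (0:ℝ)) :=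
      (exp_neg_integrableOn_Ioi 0 hc).const_mul _
    apply Integrable.mono' hg hmeas
    rw [ae_restrict_iff' measurableSet_Ioi]
    apply ae_of_all
    intro t ht
    have ht0 : (0:ℝ) ≤ t := le_of_lt ht
    have hb := (hbound t ht0).1
    have hψsq : (ψ t)^2 ≤ C^2 * Real.exp (-c*t)^2 := by
      have := abs_nonneg (ψ t)
      nlinarith [sq_abs (ψ t), Real.exp_pos (-c*t)]
    have hlinb : |(-1 + h0*t)| ≤ (1 + h0/c) * Real.exp (c*t) := by
      have h1 : c*t + 1 ≤ Real.exp (c*t) := Real.add_one_le_exp (c*t)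
      have h2 : (1:ℝ) ≤ Real.exp (c*t) := by
        rw [Real.one_le_exp_iff]; positivity
      have h3 : h0 * t ≤ (h0/c) * Real.exp (c*t) := by
        rw [div_mul_eq_mul_div, le_div_iff₀ hc]
        nlinarith
      rw [abs_le]
      constructor <;> nlinarith [mul_nonneg (le_of_lt hh0) ht0]
    have hee : Real.exp (-c*t)^2 * Real.exp (c*t) = Real.exp (-c*t) := by
      rw [← Real.exp_nat_mul, ← Real.exp_add]
      ring_nf
    have : ‖f' t‖ = h0 * ((ψ t)^2 * |(-1 + h0*t)|) := by
      simp only [hf'def, norm_mul, Real.norm_eq_abs, abs_mul, abs_neg,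
        abs_of_pos hh0, abs_of_nonneg (sq_nonneg (ψ t))]
    rw [this]
    calc h0 * ((ψ t)^2 * |(-1 + h0*t)|)
        ≤ h0 * ((C^2 * Real.exp (-c*t)^2) * ((1 + h0/c) * Real.exp (c*t))) := by
          apply mul_le_mul_of_nonneg_left _ (le_of_lt hh0)
          apply mul_le_mul hψsq hlinb (abs_nonneg _)
          positivity
      _ = (h0*C^2*(1+h0/c)) * (Real.exp (-c*t)^2 * Real.exp (c*t)) := by ring
      _ = (h0*C^2*(1+h0/c)) * Real.exp (-c*t) := by rw [hee]
  -- fundamental theorem of calculus on [0, ∞)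
  have hkey : ∫ t in Ioi (0:ℝ), f' t = 0 - F 0 :=
    integral_Ioi_of_hasDerivAt_of_tendsto hcont hF' hint hFtop
  rw [hF0, sub_zero] at hkey
  have : ∫ t in Ioi (0:ℝ), f' t = (-h0) * ∫ t in Ioi (0:ℝ), (ψ t)^2 * (-1 + h0*t) := by
    simp only [hf'def]
    exact integral_const_mul (-h0) _
  rw [this] at hkey
  rcases mul_eq_zero.mp hkey with h | h
  · exact absurd h (by simp [ne_of_gt hh0])
  · exact h
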